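/- With the matrix identity A S − S A* = i Π Π* and S > 0 (positive definite), the transfer matrix w_A(λ) = I_m − i Π* S⁻¹ (A − λ I_n)⁻¹ Π satisfies w_A(λ)* w_A(λ) = I_m − i(λ − conj(λ)) Π* (A* − λ̄ I_n)⁻¹ S⁻¹ (A − λ I_n)⁻¹ Π; in particular w_A(λ)* w_A(λ) ≤ I_m for Im λ < 0 and w_A(λ)* w_A(λ) = I_m for real λ ∉ σ(A). -/

import Mathlib

open Matrix
open scoped ComplexOrder

/-- With A S − S A* = i Π Π* and S > 0, the transfer matrix
w_A(λ) = I − i Π* S⁻¹ (A − λI)⁻¹ Π satisfies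
w_A(λ)* w_A(λ) = I − i(λ − λ̄) Π* (A* − λ̄ I)⁻¹ S⁻¹ (A − λI)⁻¹ Π;
in particular it is contractive for Im λ < 0 and unitary-valued for real λ ∉ σ(A). -/
theorem stmt_12 {n m : ℕ} (A S : Matrix (Fin n) (Fin n) ℂ)
    (B : Matrix (Fin n) (Fin m) ℂ) (lam : ℂ)
    (hS : S.PosDef)
    (hA : IsUnit (A - lam • (1 : Matrix (Fin n) (Fin n) ℂ)).det)
    (hAs : IsUnit (Aᴴ - (starRingEnd ℂ lam) • (1 : Matrix (Fin n) (Fin n) ℂ)).det)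
    (hid : A * S - S * Aᴴ = Complex.I • (B * Bᴴ))
    (w : Matrix (Fin m) (Fin m) ℂ)
    (hw : w = 1 - Complex.I •
      (Bᴴ * S⁻¹ * (A - lam • (1 : Matrix (Fin n) (Fin n) ℂ))⁻¹ * B)) :
    wᴴ * w = 1 - (Complex.I * (lam - starRingEnd ℂ lam)) •
        (Bᴴ * (Aᴴ - (starRingEnd ℂ lam) • (1 : Matrix (Fin n) (Fin n) ℂ))⁻¹
          * S⁻¹ * (A - lam • (1 : Matrix (Fin n) (Fin n) ℂ))⁻¹ * B)
    ∧ (lam.im < 0 → ((1 : Matrix (Fin m) (Fin m) ℂ) - wᴴ * w).PosSemidef)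
    ∧ (lam.im = 0 → wᴴ * w = 1) := by
  set M := A - lam • (1 : Matrix (Fin n) (Fin n) ℂ) with hMdef
  have hMH : Mᴴ = Aᴴ - (starRingEnd ℂ lam) • (1 : Matrix (Fin n) (Fin n) ℂ) := by
    simp [hMdef, conjTranspose_smul]
  have hSinv : S⁻¹ᴴ = S⁻¹ := by rw [conjTranspose_nonsing_inv, hS.1.eq]
  have hSunit : IsUnit S.det := hS.det_pos.ne'.isUnit
  have hS1 : S * S⁻¹ = 1 := mul_nonsing_inv S hSunit
  have hS2 : S⁻¹ * S = 1 := nonsing_inv_mul S hSunit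
  have hM1 : M * M⁻¹ = 1 := mul_nonsing_inv M hA
  have hM2 : M⁻¹ * M = 1 := nonsing_inv_mul M hA
  have hMHinv : M⁻¹ᴴ = Mᴴ⁻¹ := conjTranspose_nonsing_inv M
  have hMH1 : Mᴴ * Mᴴ⁻¹ = 1 := by
    rw [← hMHinv, ← conjTranspose_mul, hM2, conjTranspose_one]
  have hMH2 : Mᴴ⁻¹ * Mᴴ = 1 := by
    rw [← hMHinv, ← conjTranspose_mul, hM1, conjTranspose_one]
  set P : Matrix (Fin n) (Fin m) ℂ := S⁻¹ * (M⁻¹ * B) with hPdef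
  have hPH : Pᴴ = Bᴴ * Mᴴ⁻¹ * S⁻¹ := by
    rw [hPdef, conjTranspose_mul, conjTranspose_mul, hSinv, hMHinv, Matrix.mul_assoc]
  -- key identity
  have hkey : B * Bᴴ = (-Complex.I) • (M * S - S * Mᴴ - (starRingEnd ℂ lam - lam) • S) := by
    have h1 : M * S - S * Mᴴ = A * S - S * Aᴴ + (starRingEnd ℂ lam - lam) • S := by
      rw [hMdef, hMH]
      simp only [Matrix.sub_mul, Matrix.mul_sub, Matrix.smul_mul, Matrix.mul_smul,
        one_mul, mul_one, sub_smul]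
      abel
    rw [h1, hid]
    simp [smul_smul]
  have hPS : Pᴴ * S = Bᴴ * Mᴴ⁻¹ := by
    rw [hPH, Matrix.mul_assoc (Bᴴ * Mᴴ⁻¹), hS2, Matrix.mul_one]
  have e1 : Pᴴ * (M * (S * P)) = Pᴴ * B := by
    rw [hPdef, ← Matrix.mul_assoc S, hS1, Matrix.one_mul, ← Matrix.mul_assoc M, hM1,
      Matrix.one_mul]
  have e2 : Pᴴ * (S * (Mᴴ * P)) = Bᴴ * P := by
    rw [← Matrix.mul_assoc, hPS, Matrix.mul_assoc, ← Matrix.mul_assoc Mᴴ⁻¹, hMH2, Matrix.one_mul]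
  have e3 : Pᴴ * (S * P) = Bᴴ * (Mᴴ⁻¹ * P) := by
    rw [← Matrix.mul_assoc, hPS, Matrix.mul_assoc]
  have hcent : Pᴴ * (B * (Bᴴ * P))
      = (-Complex.I) • (Pᴴ * B) + Complex.I • (Bᴴ * P)
        + (Complex.I * (starRingEnd ℂ lam - lam)) • (Bᴴ * (Mᴴ⁻¹ * P)) := by
    have h0 : Pᴴ * (B * (Bᴴ * P)) = Pᴴ * ((B * Bᴴ) * P) := by
      simp only [Matrix.mul_assoc]
    rw [h0, hkey]
    simp only [smul_sub, smul_smul, Matrix.mul_sub, Matrix.sub_mul, Matrix.mul_smul,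
      Matrix.smul_mul, Matrix.mul_assoc]
    rw [e1, e2, e3]
    module
  have hwH : wᴴ = 1 + Complex.I • (Pᴴ * B) := by
    rw [hw]
    simp only [conjTranspose_sub, conjTranspose_smul, conjTranspose_one, conjTranspose_mul,
      conjTranspose_conjTranspose, hSinv, hMHinv, Complex.star_def, Complex.conj_I,
      neg_smul, sub_neg_eq_add, hPH]
    congr 2
    simp only [Matrix.mul_assoc]
  have hw' : w = 1 - Complex.I • (Bᴴ * P) := by
    rw [hw, hPdef]; simp only [Matrix.mul_assoc]
  have main : wᴴ * w = 1 - (Complex.I * (lam - starRingEnd ℂ lam)) •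
      (Bᴴ * (Aᴴ - (starRingEnd ℂ lam) • (1 : Matrix (Fin n) (Fin n) ℂ))⁻¹
        * S⁻¹ * (A - lam • (1 : Matrix (Fin n) (Fin n) ℂ))⁻¹ * B) := by
    have target : Bᴴ * (Aᴴ - (starRingEnd ℂ lam) • (1 : Matrix (Fin n) (Fin n) ℂ))⁻¹
        * S⁻¹ * (A - lam • (1 : Matrix (Fin n) (Fin n) ℂ))⁻¹ * B
        = Bᴴ * (Mᴴ⁻¹ * P) := by
      rw [← hMH, ← hMdef, hPdef]; simp only [Matrix.mul_assoc]
    rw [target, hwH, hw']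
    have huv : (Complex.I • (Pᴴ * B)) * (Complex.I • (Bᴴ * P))
        = -(Pᴴ * (B * (Bᴴ * P))) := by
      rw [Matrix.smul_mul, Matrix.mul_smul, smul_smul, Complex.I_mul_I, neg_one_smul,
        Matrix.mul_assoc]
    have expand : (1 + Complex.I • (Pᴴ * B)) * (1 - Complex.I • (Bᴴ * P))
        = 1 + Complex.I • (Pᴴ * B) - Complex.I • (Bᴴ * P) + Pᴴ * (B * (Bᴴ * P)) := by
      rw [Matrix.add_mul, Matrix.one_mul, Matrix.mul_sub, Matrix.mul_one, huv]
      abel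
    rw [expand, hcent]
    module
  refine ⟨main, ?_, ?_⟩
  · intro him
    rw [main]
    have h0 : (1 : Matrix (Fin m) (Fin m) ℂ) - (1 - (Complex.I * (lam - starRingEnd ℂ lam)) •
        (Bᴴ * (Aᴴ - (starRingEnd ℂ lam) • (1 : Matrix (Fin n) (Fin n) ℂ))⁻¹
          * S⁻¹ * (A - lam • (1 : Matrix (Fin n) (Fin n) ℂ))⁻¹ * B))
        = (Complex.I * (lam - starRingEnd ℂ lam)) •
        (Bᴴ * (Aᴴ - (starRingEnd ℂ lam) • (1 : Matrix (Fin n) (Fin n) ℂ))⁻¹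
          * S⁻¹ * (A - lam • (1 : Matrix (Fin n) (Fin n) ℂ))⁻¹ * B) := by
      abel
    rw [h0]
    have hform : Bᴴ * (Aᴴ - (starRingEnd ℂ lam) • (1 : Matrix (Fin n) (Fin n) ℂ))⁻¹
        * S⁻¹ * (A - lam • (1 : Matrix (Fin n) (Fin n) ℂ))⁻¹ * B
        = (M⁻¹ * B)ᴴ * S⁻¹ * (M⁻¹ * B) := by
      rw [← hMH, ← hMdef, conjTranspose_mul, hMHinv]
      simp only [Matrix.mul_assoc]
    rw [hform]
    have hps : ((M⁻¹ * B)ᴴ * S⁻¹ * (M⁻¹ * B)).PosSemidef :=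
      (hS.inv.posSemidef).conjTranspose_mul_mul_same (M⁻¹ * B)
    have hc : 0 ≤ Complex.I * (lam - starRingEnd ℂ lam) := by
      rw [Complex.nonneg_iff]
      constructor
      · simp [Complex.mul_re, Complex.sub_im, Complex.conj_im]
        linarith
      · simp [Complex.mul_im, Complex.sub_re, Complex.conj_re]
    constructor
    · unfold Matrix.IsHermitian
      rw [conjTranspose_smul, hps.1.eq]
      congr 1
      exact Complex.conj_eq_iff_im.mpr (Complex.nonneg_iff.mp hc).2.symm
    · intro x
      have hx := mul_nonneg hc (hps.2 x)
      convert hx using 1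
      rw [Finsupp.mul_sum]
      refine Finsupp.sum_congr fun i _ => ?_
      rw [Finsupp.mul_sum]
      refine Finsupp.sum_congr fun j _ => ?_
      simp only [Matrix.smul_apply, smul_eq_mul]
      ring
  · intro him
    rw [main, Complex.conj_eq_iff_im.mpr him]
    simp
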